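/- Let p, q be coprime positive integers and k a positive integer, and let Λ_{k,q,1} = (1/(2k))ℤ × ℤ⁴ × 2πqℤ, a lattice of Osc₂(1, p/q). Then the normalizer of Λ_{k,q,1} in Osc₂(1, p/q) is N(Λ_{k,q,1}) = ℝ × (1/(2k))ℤ⁴ × (qπ/2)ℤ, i.e. an element g = (z, v, t) satisfies gΛ_{k,q,1}g⁻¹ = Λ_{k,q,1} if and only if v ∈ (1/(2k))ℤ⁴ and t ∈ (qπ/2)ℤ. -/

import Mathlib

open Real

noncomputable section

/-- rotation by angle `θ` acting on `ℝ × ℝ` -/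
def rot (θ : ℝ) (p : ℝ × ℝ) : ℝ × ℝ :=
  (Real.cos θ * p.1 - Real.sin θ * p.2, Real.sin θ * p.1 + Real.cos θ * p.2)

/-- the matrix `[[0,1],[-1,0]]` acting on `ℝ × ℝ` -/
def Jpair (p : ℝ × ℝ) : ℝ × ℝ := (p.2, -p.1)

/-- euclidean inner product on `ℝ × ℝ` -/
def dot2 (p q : ℝ × ℝ) : ℝ := p.1 * q.1 + p.2 * q.2

/-- underlying set `ℝ × ℝ^{2n} × ℝ` of the oscillator group, where the middle
factor `ℝ^{2n}` is recorded as `n` pairs `(x_i, y_i)`. -/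
abbrev OscG (n : ℕ) := ℝ × (Fin n → ℝ × ℝ) × ℝ

/-- multiplication of the oscillator group `Osc_n(λ₁,…,λₙ)`:
`(z₁,v₁,t₁)·(z₂,v₂,t₂) = (z₁+z₂+½ v₁ᵀ J R(t₁) v₂, v₁ + R(t₁)v₂, t₁+t₂)`,
where `R(t)` rotates the `i`-th pair by the angle `λ_i t`. -/
def oscMul {n : ℕ} (lam : Fin n → ℝ) (g h : OscG n) : OscG n :=
  (g.1 + h.1 + (1/2) * ∑ i, dot2 (g.2.1 i) (Jpair (rot (lam i * g.2.2) (h.2.1 i))),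
   fun i => g.2.1 i + rot (lam i * g.2.2) (h.2.1 i),
   g.2.2 + h.2.2)

/-- identity element of the oscillator group -/
def oscOne (n : ℕ) : OscG n := (0, fun _ => (0, 0), 0)

/-- inverse in the oscillator group: `(z,v,t)⁻¹ = (-z, -R(-t)v, -t)` -/
def oscInv {n : ℕ} (lam : Fin n → ℝ) (g : OscG n) : OscG n :=
  (-g.1, fun i => -(rot (lam i * (-g.2.2)) (g.2.1 i)), -g.2.2)

/-- `Γ` is a lattice of the oscillator group: a discrete subgroup with compact
quotient (the quotient by the right multiplication action of `Γ`). -/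
structure IsLattice {n : ℕ} (lam : Fin n → ℝ) (Γ : Set (OscG n)) : Prop where
  one_mem : oscOne n ∈ Γ
  mul_mem : ∀ g ∈ Γ, ∀ h ∈ Γ, oscMul lam g h ∈ Γ
  inv_mem : ∀ g ∈ Γ, oscInv lam g ∈ Γ
  discrete : DiscreteTopology Γ
  cocompact : CompactSpace (Quot (fun g h : OscG n => ∃ γ ∈ Γ, h = oscMul lam g γ))

/-- `Q(X) = 2ad + Σ_k (b_k² + c_k²)/λ_k` for `X = (d,(b₁,c₁,…,bₙ,cₙ),a)` -/
def Qform {n : ℕ} (lam : Fin n → ℝ) (d a : ℝ) (b c : Fin n → ℝ) : ℝ :=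
  2 * a * d + ∑ k, (b k ^ 2 + c k ^ 2) / lam k

/-- the geodesic through the identity with initial velocity
`X = (d,(b₁,c₁,…,bₙ,cₙ),a)` for the bi-invariant Lorentzian metric on the
oscillator group. -/
def geo {n : ℕ} (lam : Fin n → ℝ) (d : ℝ) (b c : Fin n → ℝ) (a : ℝ) (s : ℝ) : OscG n :=
  if a = 0 then (d * s, fun j => (b j * s, c j * s), 0)
  else
    ((d + (1/(2*a)) * ∑ k, (b k ^ 2 + c k ^ 2) / lam k) * s
        - (1/(2*a^2)) * ∑ k, ((b k ^ 2 + c k ^ 2) / (lam k)^2) * Real.sin (lam k * a * s),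
     fun j => ((1/(a * lam j)) * (b j * Real.sin (lam j * a * s)
                  + c j * Real.cos (lam j * a * s) - c j),
               (1/(a * lam j)) * (-(b j) * Real.cos (lam j * a * s)
                  + c j * Real.sin (lam j * a * s) + b j)),
     a * s)

/-- the frequencies `(1, p/q)` of the oscillator group `Osc₂(1, p/q)` -/
def lam2 (p q : ℕ) : Fin 2 → ℝ := ![1, (p : ℝ) / q]

/-- the set `(1/(2k))ℤ × ℤ⁴ × Tℤ ⊆ Osc₂(1, p/q)` -/
def LamO2 (k : ℕ) (T : ℝ) : Set (OscG 2) :=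
  {g | (∃ m : ℤ, g.1 = m / (2 * k))
    ∧ (∀ i : Fin 2, (∃ a : ℤ, (g.2.1 i).1 = a) ∧ (∃ b : ℤ, (g.2.1 i).2 = b))
    ∧ ∃ c : ℤ, g.2.2 = c * T}

/-- conjugation `γ ↦ g γ g⁻¹` in the oscillator group -/
def oscConj {n : ℕ} (lam : Fin n → ℝ) (g : OscG n) : OscG n → OscG n :=
  fun γ => oscMul lam (oscMul lam g γ) (oscInv lam g)

lemma rot_rot (a b : ℝ) (x : ℝ × ℝ) : rot a (rot b x) = rot (a + b) x := by
  simp only [rot, Real.cos_add, Real.sin_add, Prod.mk.injEq]; constructor <;> ring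

lemma rot_zero (x : ℝ × ℝ) : rot 0 x = x := by
  simp [rot]

lemma rot_eq_self_of (θ : ℝ) (h1 : Real.cos θ = 1) (h2 : Real.sin θ = 0) (x : ℝ × ℝ) :
    rot θ x = x := by
  simp [rot, h1, h2]

lemma rot_two_pi_int (n : ℤ) (x : ℝ × ℝ) : rot (n * (2 * Real.pi)) x = x := by
  apply rot_eq_self_of
  · exact Real.cos_int_mul_two_pi n
  · rw [show (n:ℝ) * (2*Real.pi) = (2*n : ℤ) * Real.pi by push_cast; ring]
    exact Real.sin_int_mul_pi _

lemma rot_neg_vec (a : ℝ) (x : ℝ × ℝ) : rot a (-x) = -(rot a x) := by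
  have h : -(rot a x) = (-(Real.cos a * x.1 - Real.sin a * x.2),
      -(Real.sin a * x.1 + Real.cos a * x.2)) := rfl
  rw [h]
  simp only [rot, Prod.fst_neg, Prod.snd_neg, Prod.mk.injEq]
  constructor <;> ring

/-- cos and sin of integer multiples of π/2 are integers -/
lemma intCS (n : ℤ) : ∃ a b : ℤ, Real.cos (n * (Real.pi/2)) = a ∧ Real.sin (n * (Real.pi/2)) = b := by
  induction n using Int.induction_on with
  | zero => exact ⟨1, 0, by simp⟩
  | succ n ih =>
    obtain ⟨a, b, ha, hb⟩ := ih
    refine ⟨-b, a, ?_, ?_⟩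
    · rw [show ((n:ℤ)+1 : ℤ) * (Real.pi/2) = (n:ℤ) * (Real.pi/2) + Real.pi/2 by push_cast; ring,
        Real.cos_add_pi_div_two, hb]; push_cast; ring
    · rw [show ((n:ℤ)+1 : ℤ) * (Real.pi/2) = (n:ℤ) * (Real.pi/2) + Real.pi/2 by push_cast; ring,
        Real.sin_add_pi_div_two, ha]
  | pred n ih =>
    obtain ⟨a, b, ha, hb⟩ := ih
    push_cast at ha hb
    have e : ((-(n:ℤ)-1 : ℤ) : ℝ) * (Real.pi/2) = (-(n:ℝ)) * (Real.pi/2) - Real.pi/2 := by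
      push_cast; ring
    refine ⟨b, -a, ?_, ?_⟩
    · rw [e, Real.cos_sub_pi_div_two, hb]
    · rw [e, Real.sin_sub_pi_div_two, ha]; push_cast; ring

/-- key conjugation formula, valid when `R(lam i s)` fixes the middle part of `g` -/
lemma oscConj_eq {n : ℕ} (lam : Fin n → ℝ) (g γ : OscG n)
    (hs : ∀ i, rot (lam i * γ.2.2) (g.2.1 i) = g.2.1 i) :
    oscConj lam g γ =
      (γ.1 + ∑ i, dot2 (g.2.1 i) (Jpair (rot (lam i * g.2.2) (γ.2.1 i))),
       fun i => rot (lam i * g.2.2) (γ.2.1 i), γ.2.2) := by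
  obtain ⟨z, v, t⟩ := g
  obtain ⟨w, u, s⟩ := γ
  simp only at hs
  have key : ∀ i, rot (lam i * (t + s)) (-(rot (lam i * -t) (v i))) = -(v i) := by
    intro i
    rw [rot_neg_vec, rot_rot, show lam i * (t+s) + lam i * -t = lam i * s by ring, hs i]
  simp only [oscConj, oscMul, oscInv]
  refine Prod.ext ?_ (Prod.ext ?_ ?_)
  · simp only
    have h2 : ∀ i, dot2 (v i + rot (lam i * t) (u i))
        (Jpair (rot (lam i * (t + s)) (-(rot (lam i * -t) (v i)))))
        = dot2 (v i) (Jpair (rot (lam i * t) (u i))) := by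
      intro i
      rw [key i]
      obtain ⟨v1, v2⟩ := v i
      obtain ⟨r1, r2⟩ := rot (lam i * t) (u i)
      simp only [dot2, Jpair, Prod.fst_neg, Prod.snd_neg, Prod.mk.injEq, Prod.fst_add, Prod.snd_add]
      ring
    rw [Finset.sum_congr rfl (fun i _ => h2 i)]
    ring
  · funext i
    simp only
    rw [key i]
    abel
  · simp only; ring

/-- rotation by `lam2 p q i * s` is trivial when `s ∈ 2πqℤ` -/
lemma rot_fix (p q : ℕ) (hq : 0 < q) (c : ℤ) (s : ℝ) (hs : s = c * (2 * Real.pi * q))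
    (i : Fin 2) (x : ℝ × ℝ) : rot (lam2 p q i * s) x = x := by
  have hq0 : (q : ℝ) ≠ 0 := Nat.cast_ne_zero.mpr hq.ne'
  fin_cases i
  · show rot (lam2 p q 0 * s) x = x
    rw [show lam2 p q 0 * s = (c * q : ℤ) * (2 * Real.pi) by
      rw [hs]; simp [lam2]; push_cast; ring]
    exact rot_two_pi_int _ _
  · show rot (lam2 p q 1 * s) x = x
    rw [show lam2 p q 1 * s = (c * p : ℤ) * (2 * Real.pi) by
      rw [hs]; simp only [lam2]; norm_num [Matrix.cons_val_one, Matrix.head_cons]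
      push_cast; field_simp]
    exact rot_two_pi_int _ _

/-- `cos` and `sin` of `lam2 p q i * t` are integers when `t ∈ (qπ/2)ℤ` -/
lemma rotcs (p q : ℕ) (hq : 0 < q) (m : ℤ) (t : ℝ) (ht : t = m * (q * Real.pi / 2))
    (i : Fin 2) :
    ∃ A B : ℤ, Real.cos (lam2 p q i * t) = A ∧ Real.sin (lam2 p q i * t) = B := by
  have hq0 : (q : ℝ) ≠ 0 := Nat.cast_ne_zero.mpr hq.ne'
  fin_cases i
  · show ∃ A B : ℤ, Real.cos (lam2 p q 0 * t) = A ∧ Real.sin (lam2 p q 0 * t) = B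
    have : lam2 p q 0 * t = (m * q : ℤ) * (Real.pi / 2) := by
      rw [ht]; simp [lam2]; push_cast; ring
    rw [this]; exact intCS _
  · show ∃ A B : ℤ, Real.cos (lam2 p q 1 * t) = A ∧ Real.sin (lam2 p q 1 * t) = B
    have : lam2 p q 1 * t = (m * p : ℤ) * (Real.pi / 2) := by
      rw [ht]; simp only [lam2]; norm_num [Matrix.cons_val_one, Matrix.head_cons]
      push_cast; field_simp
    rw [this]; exact intCS _

lemma rot_zero_pair (θ : ℝ) : rot θ ((0 : ℝ), (0 : ℝ)) = (0, 0) := by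
  simp [rot]
lemma conj_mem (p q k : ℕ) (hq : 0 < q) (hk : 0 < k) (g : OscG 2)
    (hv : ∀ i : Fin 2, ∃ m₁ m₂ : ℤ, g.2.1 i = ((m₁ : ℝ) / (2 * k), (m₂ : ℝ) / (2 * k)))
    (hm : ∃ m : ℤ, g.2.2 = m * (q * Real.pi / 2)) :
    ∀ γ ∈ LamO2 k (2 * Real.pi * q),
      oscConj (lam2 p q) g γ ∈ LamO2 k (2 * Real.pi * q) := by
  obtain ⟨m, ht⟩ := hm
  intro γ hγ
  obtain ⟨⟨mw, hw⟩, hu, c, hc⟩ := hγ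
  have hk0 : (2 * k : ℝ) ≠ 0 := by positivity
  have hs : ∀ i, rot (lam2 p q i * γ.2.2) (g.2.1 i) = g.2.1 i :=
    fun i => rot_fix p q hq c γ.2.2 hc i _
  rw [oscConj_eq _ _ _ hs]
  have hrot : ∀ i : Fin 2, ∃ X Y : ℤ,
      rot (lam2 p q i * g.2.2) (γ.2.1 i) = ((X : ℝ), (Y : ℝ)) := by
    intro i
    obtain ⟨A, B, hA, hB⟩ := rotcs p q hq m g.2.2 ht i
    obtain ⟨⟨a, ha⟩, ⟨b, hb⟩⟩ := hu i
    refine ⟨A * a - B * b, B * a + A * b, ?_⟩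
    have : γ.2.1 i = ((a : ℝ), (b : ℝ)) := Prod.ext ha hb
    rw [this]
    simp only [rot, hA, hB, Prod.mk.injEq]
    push_cast; constructor <;> ring
  obtain ⟨X0, Y0, h0⟩ := hrot 0
  obtain ⟨X1, Y1, h1⟩ := hrot 1
  obtain ⟨a0, b0, hv0⟩ := hv 0
  obtain ⟨a1, b1, hv1⟩ := hv 1
  refine ⟨⟨mw + (a0 * Y0 - b0 * X0) + (a1 * Y1 - b1 * X1), ?_⟩, ?_, ⟨c, hc⟩⟩
  · show γ.1 + _ = _
    rw [Fin.sum_univ_two, h0, h1, hv0, hv1, hw]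
    simp only [dot2, Jpair]
    push_cast; field_simp; ring
  · intro i
    obtain ⟨X, Y, hXY⟩ := hrot i
    exact ⟨⟨X, by show (rot (lam2 p q i * g.2.2) (γ.2.1 i)).1 = (X:ℝ); rw [hXY]⟩,
           ⟨Y, by show (rot (lam2 p q i * g.2.2) (γ.2.1 i)).2 = (Y:ℝ); rw [hXY]⟩⟩

lemma angle_half_pi (θ : ℝ) (A B : ℤ) (hA : Real.cos θ = A) (hB : Real.sin θ = B) :
    ∃ n : ℤ, θ = n * (Real.pi / 2) := by
  by_cases hB0 : Real.sin θ = 0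
  · obtain ⟨n, hn⟩ := Real.sin_eq_zero_iff.1 hB0
    exact ⟨2 * n, by push_cast; linarith⟩
  · have hBne : B ≠ 0 := by
      intro h; rw [h] at hB; push_cast at hB; exact hB0 hB
    have h1 : (1 : ℝ) ≤ (B : ℝ) ^ 2 := by
      have h2 : (1 : ℤ) ≤ B ^ 2 := by
        have h3 := Int.one_le_abs hBne
        nlinarith [sq_abs B, abs_nonneg B]
      exact_mod_cast h2
    have pyth := Real.sin_sq_add_cos_sq θ
    have hsq : Real.sin θ ^ 2 = (B : ℝ) ^ 2 := by rw [hB]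
    have hcsq : Real.cos θ ^ 2 ≤ 0 := by linarith
    have hcos : Real.cos θ = 0 := by nlinarith [sq_nonneg (Real.cos θ)]
    obtain ⟨n, hn⟩ := Real.cos_eq_zero_iff.1 hcos
    exact ⟨2 * n + 1, by push_cast; linarith⟩
lemma base_mem (k : ℕ) (T : ℝ) (x y : ℝ × ℝ)
    (hx1 : ∃ a : ℤ, x.1 = a) (hx2 : ∃ a : ℤ, x.2 = a)
    (hy1 : ∃ a : ℤ, y.1 = a) (hy2 : ∃ a : ℤ, y.2 = a) :
    ((0 : ℝ), ![x, y], (0 : ℝ)) ∈ LamO2 k T := by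
  refine ⟨⟨0, by norm_num⟩, ?_, ⟨0, by norm_num⟩⟩
  intro i
  fin_cases i
  · exact ⟨hx1, hx2⟩
  · exact ⟨hy1, hy2⟩

lemma forward_extract (k : ℕ) (hk : 0 < k) (θ : ℝ) (v : ℝ × ℝ)
    (A B : ℤ) (hA : Real.cos θ = A) (hB : Real.sin θ = B)
    (mx : ℤ) (hx : v.1 * Real.sin θ - v.2 * Real.cos θ = mx / (2 * k))
    (my : ℤ) (hy : v.1 * Real.cos θ + v.2 * Real.sin θ = my / (2 * k)) :
    (∃ m₁ m₂ : ℤ, v = ((m₁ : ℝ) / (2 * k), (m₂ : ℝ) / (2 * k)))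
      ∧ ∃ n : ℤ, θ = n * (Real.pi / 2) := by
  have pyth := Real.sin_sq_add_cos_sq θ
  rw [hA, hB] at pyth hx hy
  constructor
  · refine ⟨A * my + B * mx, B * my - A * mx, ?_⟩
    have h1 : v.1 = ((A * my + B * mx : ℤ) : ℝ) / (2 * k) := by
      push_cast
      linear_combination (A : ℝ) * hy + (B : ℝ) * hx - v.1 * pyth
    have h2 : v.2 = ((B * my - A * mx : ℤ) : ℝ) / (2 * k) := by
      push_cast
      linear_combination (B : ℝ) * hy - (A : ℝ) * hx - v.2 * pyth
    exact Prod.ext h1 h2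
  · exact angle_half_pi θ A B hA hB
/-- The normalizer of the lattice `Λ_{k,q,1} = (1/(2k))ℤ × ℤ⁴ × 2πqℤ` in
`Osc₂(1, p/q)` is `ℝ × (1/(2k))ℤ⁴ × (qπ/2)ℤ`. -/
theorem stmt_17 (p q k : ℕ) (hp : 0 < p) (hq : 0 < q) (hk : 0 < k)
    (hpq : Nat.Coprime p q) (g : OscG 2) :
    oscConj (lam2 p q) g '' LamO2 k (2 * Real.pi * q) = LamO2 k (2 * Real.pi * q) ↔
      ((∀ i : Fin 2, ∃ m₁ m₂ : ℤ, g.2.1 i = ((m₁ : ℝ) / (2 * k), (m₂ : ℝ) / (2 * k)))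
        ∧ ∃ m : ℤ, g.2.2 = m * (q * Real.pi / 2)) := by
  constructor
  · intro h
    have hsub : ∀ γ ∈ LamO2 k (2 * Real.pi * q),
        oscConj (lam2 p q) g γ ∈ LamO2 k (2 * Real.pi * q) := by
      intro γ hγ
      rw [← h]; exact Set.mem_image_of_mem _ hγ
    have hs0 : ∀ (u : Fin 2 → ℝ × ℝ) (i : Fin 2),
        rot (lam2 p q i * (((0 : ℝ), u, (0 : ℝ)) : OscG 2).2.2) (g.2.1 i) = g.2.1 i := by
      intro u i
      rw [show lam2 p q i * (((0 : ℝ), u, (0 : ℝ)) : OscG 2).2.2 = 0 from mul_zero _]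
      exact rot_zero _
    -- basis element (1,0) in slot 0
    have m0a := hsub _ (base_mem k (2 * Real.pi * q) ((1 : ℝ), (0 : ℝ)) ((0 : ℝ), (0 : ℝ))
      ⟨1, by norm_num⟩ ⟨0, by norm_num⟩ ⟨0, by norm_num⟩ ⟨0, by norm_num⟩)
    rw [oscConj_eq _ _ _ (hs0 ![((1 : ℝ), (0 : ℝ)), ((0 : ℝ), (0 : ℝ))])] at m0a
    obtain ⟨⟨mx0, hx0⟩, hmid0, -⟩ := m0a
    -- basis element (0,1) in slot 0
    have m0b := hsub _ (base_mem k (2 * Real.pi * q) ((0 : ℝ), (1 : ℝ)) ((0 : ℝ), (0 : ℝ))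
      ⟨0, by norm_num⟩ ⟨1, by norm_num⟩ ⟨0, by norm_num⟩ ⟨0, by norm_num⟩)
    rw [oscConj_eq _ _ _ (hs0 ![((0 : ℝ), (1 : ℝ)), ((0 : ℝ), (0 : ℝ))])] at m0b
    obtain ⟨⟨my0, hy0⟩, -, -⟩ := m0b
    -- basis element (1,0) in slot 1
    have m1a := hsub _ (base_mem k (2 * Real.pi * q) ((0 : ℝ), (0 : ℝ)) ((1 : ℝ), (0 : ℝ))
      ⟨0, by norm_num⟩ ⟨0, by norm_num⟩ ⟨1, by norm_num⟩ ⟨0, by norm_num⟩)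
    rw [oscConj_eq _ _ _ (hs0 ![((0 : ℝ), (0 : ℝ)), ((1 : ℝ), (0 : ℝ))])] at m1a
    obtain ⟨⟨mx1, hx1⟩, hmid1, -⟩ := m1a
    -- basis element (0,1) in slot 1
    have m1b := hsub _ (base_mem k (2 * Real.pi * q) ((0 : ℝ), (0 : ℝ)) ((0 : ℝ), (1 : ℝ))
      ⟨0, by norm_num⟩ ⟨0, by norm_num⟩ ⟨0, by norm_num⟩ ⟨1, by norm_num⟩)
    rw [oscConj_eq _ _ _ (hs0 ![((0 : ℝ), (0 : ℝ)), ((0 : ℝ), (1 : ℝ))])] at m1b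
    obtain ⟨⟨my1, hy1⟩, -, -⟩ := m1b
    -- extract cos/sin integrality in slot 0
    obtain ⟨A0, hA0⟩ : ∃ a : ℤ, (rot (lam2 p q 0 * g.2.2) ((1 : ℝ), (0 : ℝ))).1 = a :=
      (hmid0 0).1
    obtain ⟨B0, hB0⟩ : ∃ b : ℤ, (rot (lam2 p q 0 * g.2.2) ((1 : ℝ), (0 : ℝ))).2 = b :=
      (hmid0 0).2
    simp only [rot] at hA0 hB0
    have hA0' : Real.cos (lam2 p q 0 * g.2.2) = A0 := by linear_combination hA0
    have hB0' : Real.sin (lam2 p q 0 * g.2.2) = B0 := by linear_combination hB0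
    -- extract cos/sin integrality in slot 1
    obtain ⟨A1, hA1⟩ : ∃ a : ℤ, (rot (lam2 p q 1 * g.2.2) ((1 : ℝ), (0 : ℝ))).1 = a :=
      (hmid1 1).1
    obtain ⟨B1, hB1⟩ : ∃ b : ℤ, (rot (lam2 p q 1 * g.2.2) ((1 : ℝ), (0 : ℝ))).2 = b :=
      (hmid1 1).2
    simp only [rot] at hA1 hB1
    have hA1' : Real.cos (lam2 p q 1 * g.2.2) = A1 := by linear_combination hA1
    have hB1' : Real.sin (lam2 p q 1 * g.2.2) = B1 := by linear_combination hB1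
    -- massage the z-component conditions
    simp only [Fin.sum_univ_two, Matrix.cons_val_zero, Matrix.cons_val_one, Matrix.head_cons,
      dot2, Jpair, rot] at hx0 hy0 hx1 hy1
    have ex0 : (g.2.1 0).1 * Real.sin (lam2 p q 0 * g.2.2)
        - (g.2.1 0).2 * Real.cos (lam2 p q 0 * g.2.2) = mx0 / (2 * k) := by
      linear_combination hx0
    have ey0 : (g.2.1 0).1 * Real.cos (lam2 p q 0 * g.2.2)
        + (g.2.1 0).2 * Real.sin (lam2 p q 0 * g.2.2) = my0 / (2 * k) := by
      linear_combination hy0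
    have ex1 : (g.2.1 1).1 * Real.sin (lam2 p q 1 * g.2.2)
        - (g.2.1 1).2 * Real.cos (lam2 p q 1 * g.2.2) = mx1 / (2 * k) := by
      linear_combination hx1
    have ey1 : (g.2.1 1).1 * Real.cos (lam2 p q 1 * g.2.2)
        + (g.2.1 1).2 * Real.sin (lam2 p q 1 * g.2.2) = my1 / (2 * k) := by
      linear_combination hy1
    obtain ⟨hv0, n0, hn0⟩ := forward_extract k hk _ _ A0 B0 hA0' hB0' mx0 ex0 my0 ey0
    obtain ⟨hv1, n1, hn1⟩ := forward_extract k hk _ _ A1 B1 hA1' hB1' mx1 ex1 my1 ey1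
    constructor
    · intro i
      fin_cases i
      · exact hv0
      · exact hv1
    · -- coprimality argument
      have l0 : lam2 p q 0 = 1 := by simp [lam2]
      have l1 : lam2 p q 1 = (p : ℝ) / q := by
        simp [lam2]
      have hq0 : (q : ℝ) ≠ 0 := Nat.cast_ne_zero.mpr hq.ne'
      rw [l0, one_mul] at hn0
      rw [l1, hn0] at hn1
      rw [div_mul_eq_mul_div, div_eq_iff hq0] at hn1
      have e1 : (p : ℝ) * n0 * Real.pi = (q : ℝ) * n1 * Real.pi := by
        linear_combination 2 * hn1
      have e2 : (p : ℝ) * n0 = (q : ℝ) * n1 := mul_right_cancel₀ Real.pi_ne_zero e1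
      have e3 : (p : ℤ) * n0 = (q : ℤ) * n1 := by exact_mod_cast e2
      have hcop : IsCoprime (q : ℤ) (p : ℤ) := Nat.isCoprime_iff_coprime.mpr hpq.symm
      obtain ⟨d, hd⟩ := hcop.dvd_of_dvd_mul_left ⟨n1, e3⟩
      refine ⟨d, ?_⟩
      rw [hn0, hd]
      push_cast; ring
  · rintro ⟨hv, hm⟩
    apply Set.eq_of_subset_of_subset
    · rintro δ ⟨γ, hγ, rfl⟩
      exact conj_mem p q k hq hk g hv hm γ hγ
    · intro δ hδ
      obtain ⟨⟨md, hd⟩, hu, c, hc⟩ := hδ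
      obtain ⟨m, ht⟩ := hm
      have hk0 : (2 * (k : ℝ)) ≠ 0 := by positivity
      have hrotinv : ∀ i : Fin 2, ∃ X Y : ℤ,
          rot (-(lam2 p q i * g.2.2)) (δ.2.1 i) = ((X : ℝ), (Y : ℝ)) := by
        intro i
        obtain ⟨A, B, hA, hB⟩ := rotcs p q hq m g.2.2 ht i
        obtain ⟨⟨a, ha⟩, ⟨b, hb⟩⟩ := hu i
        refine ⟨A * a + B * b, -B * a + A * b, ?_⟩
        have hδi : δ.2.1 i = ((a : ℝ), (b : ℝ)) := Prod.ext ha hb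
        rw [hδi]
        simp only [rot, Real.cos_neg, Real.sin_neg, hA, hB, Prod.mk.injEq]
        push_cast; constructor <;> ring
      refine ⟨(δ.1 - ∑ i, dot2 (g.2.1 i) (Jpair (δ.2.1 i)),
               fun i => rot (-(lam2 p q i * g.2.2)) (δ.2.1 i), δ.2.2), ?_, ?_⟩
      · -- membership of the preimage element
        obtain ⟨a0, b0, hv0⟩ := hv 0
        obtain ⟨a1, b1, hv1⟩ := hv 1
        obtain ⟨⟨u01, hu01⟩, ⟨u02, hu02⟩⟩ := hu 0
        obtain ⟨⟨u11, hu11⟩, ⟨u12, hu12⟩⟩ := hu 1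
        refine ⟨⟨md - (a0 * u02 - b0 * u01) - (a1 * u12 - b1 * u11), ?_⟩, ?_, ⟨c, hc⟩⟩
        · show δ.1 - _ = _
          rw [Fin.sum_univ_two, hv0, hv1, hd]
          simp only [dot2, Jpair]
          rw [hu01, hu02, hu11, hu12]
          push_cast; field_simp; ring
        · intro i
          obtain ⟨X, Y, hXY⟩ := hrotinv i
          exact ⟨⟨X, by show (rot (-(lam2 p q i * g.2.2)) (δ.2.1 i)).1 = (X : ℝ); rw [hXY]⟩,
                 ⟨Y, by show (rot (-(lam2 p q i * g.2.2)) (δ.2.1 i)).2 = (Y : ℝ); rw [hXY]⟩⟩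
      · -- conjugation brings it back to δ
        have hs : ∀ i, rot (lam2 p q i *
            ((δ.1 - ∑ i, dot2 (g.2.1 i) (Jpair (δ.2.1 i)),
              fun i => rot (-(lam2 p q i * g.2.2)) (δ.2.1 i), δ.2.2) : OscG 2).2.2)
            (g.2.1 i) = g.2.1 i :=
          fun i => rot_fix p q hq c δ.2.2 hc i _
        rw [oscConj_eq _ _ _ hs]
        have hmid : ∀ i : Fin 2,
            rot (lam2 p q i * g.2.2) (rot (-(lam2 p q i * g.2.2)) (δ.2.1 i)) = δ.2.1 i := by
          intro i
          rw [rot_rot, show lam2 p q i * g.2.2 + -(lam2 p q i * g.2.2) = 0 by ring]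
          exact rot_zero _
        refine Prod.ext ?_ (Prod.ext ?_ ?_)
        · show (δ.1 - ∑ i, dot2 (g.2.1 i) (Jpair (δ.2.1 i)))
            + ∑ i, dot2 (g.2.1 i) (Jpair (rot (lam2 p q i * g.2.2)
                (rot (-(lam2 p q i * g.2.2)) (δ.2.1 i)))) = δ.1
          have hsum : ∑ i, dot2 (g.2.1 i) (Jpair (rot (lam2 p q i * g.2.2)
                (rot (-(lam2 p q i * g.2.2)) (δ.2.1 i))))
              = ∑ i, dot2 (g.2.1 i) (Jpair (δ.2.1 i)) :=
            Finset.sum_congr rfl (fun i _ => by rw [hmid i])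
          rw [hsum]; ring
        · show (fun i => rot (lam2 p q i * g.2.2)
              (rot (-(lam2 p q i * g.2.2)) (δ.2.1 i))) = δ.2.1
          funext i
          exact hmid i
        · rfl
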